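/- Identify ℝ³ with {z ∈ ℂ³ : Im z₁ = Im z₂ = Im z₃ = 0} and let R = {z ∈ ℂ³ : Im z = 0 and (Re z₃)((Re z₁)² + (Re z₂)²)((Re z₁) + (Re z₂)) = (Re z₁)⁴}. Then there is no pair (U, X) where U ⊆ ℂ³ is an open set containing R and X is a complex analytic subset of U such that for every point p ∈ R the germ X_p is the smallest complex analytic germ containing the germ R_p (i.e. R_p ⊆ X_p and X_p ⊆ Y_p for every complex analytic subset Y of any open neighborhood of p with R_p ⊆ Y_p). -/

import Mathlib

open scoped ENNReal

noncomputable section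

/-- Germ inclusion `R_p ⊆ Q_p`: `R ∩ V ⊆ Q` for some open neighbourhood `V` of `p`. -/
def GermLE {E : Type*} [TopologicalSpace E] (R Q : Set E) (p : E) : Prop :=
  ∃ V : Set E, IsOpen V ∧ p ∈ V ∧ R ∩ V ⊆ Q

/-- `R` is a real analytic subset of the open set `Ω`. -/
def IsRealAnalyticSubset {E : Type*} [NormedAddCommGroup E] [NormedSpace ℝ E]
    (Ω R : Set E) : Prop :=
  R ⊆ Ω ∧ ∀ p ∈ Ω, ∃ U : Set E, IsOpen U ∧ p ∈ U ∧ U ⊆ Ω ∧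
    ∃ (k : ℕ) (φ : Fin k → E → ℝ),
      (∀ i, AnalyticOnNhd ℝ (φ i) U) ∧ R ∩ U = {x ∈ U | ∀ i, φ i x = 0}

/-- `X` is a complex analytic subset of the open set `W`. -/
def IsComplexAnalyticSubset {E : Type*} [NormedAddCommGroup E] [NormedSpace ℂ E]
    (W X : Set E) : Prop :=
  X ⊆ W ∧ ∀ p ∈ W, ∃ U : Set E, IsOpen U ∧ p ∈ U ∧ U ⊆ W ∧
    ∃ (k : ℕ) (φ : Fin k → E → ℂ),
      (∀ i, AnalyticOnNhd ℂ (φ i) U) ∧ X ∩ U = {x ∈ U | ∀ i, φ i x = 0}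

/-- The local (Hausdorff) dimension of `R` at `p`. -/
def locDim {E : Type*} [EMetricSpace E] (R : Set E) (p : E) : ℝ≥0∞ :=
  ⨅ (U : Set E) (_ : IsOpen U) (_ : p ∈ U), dimH (R ∩ U)

/-- `X` represents the smallest complex analytic germ at `p` containing the germ of `R`. -/
def IsSmallestComplexGermAt {E : Type*} [NormedAddCommGroup E] [NormedSpace ℂ E]
    (R : Set E) (p : E) (X : Set E) : Prop :=
  (∃ U : Set E, IsOpen U ∧ p ∈ U ∧ IsComplexAnalyticSubset U X) ∧
  GermLE R X p ∧
  ∀ (U' Y : Set E), IsOpen U' → p ∈ U' → IsComplexAnalyticSubset U' Y →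
    GermLE R Y p → GermLE X Y p

/-- `S` is closed and nowhere dense in `R` (with its subspace topology). -/
def ClosedNowhereDenseIn {E : Type*} [TopologicalSpace E] (R S : Set E) : Prop :=
  S ⊆ R ∧ IsClosed {x : R | (x : E) ∈ S} ∧ interior {x : R | (x : E) ∈ S} = ∅

/-- The set `{x₃(x₁² + x₂²)(x₁ + x₂) = x₁⁴} ⊆ ℝ³ ⊆ ℂ³`. -/
def cartanSet3C : Set (Fin 3 → ℂ) :=
  {z | (∀ j, (z j).im = 0) ∧
    (z 2).re * ((z 0).re ^ 2 + (z 1).re ^ 2) * ((z 0).re + (z 1).re) = (z 0).re ^ 4}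

namespace S15

open Filter Metric Complex

def cpoly (s : ℂ) : ℂ := s^3 - 2*s^2 + 2*s

lemma hasDerivAt_cpoly (s : ℂ) : HasDerivAt cpoly (3*s^2 - 4*s + 2) s := by
  have h : HasDerivAt (fun s : ℂ => s^3 - 2*s^2 + 2*s)
      ((((3:ℕ):ℂ)*s^(3-1) - 2*(((2:ℕ):ℂ)*s^(2-1))) + 2*1) s :=
    ((hasDerivAt_pow 3 s).sub ((hasDerivAt_pow 2 s).const_mul 2)).add
      ((hasDerivAt_id s).const_mul 2)
  convert h using 1
  · rfl
  push_cast; ring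

lemma hasStrictDerivAt_cpoly0 : HasStrictDerivAt cpoly 2 (0:ℂ) := by
  have h : HasStrictDerivAt (fun s : ℂ => s^3 - 2*s^2 + 2*s)
      ((((3:ℕ):ℂ)*(0:ℂ)^(3-1) - 2*(((2:ℕ):ℂ)*(0:ℂ)^(2-1))) + 2*1) 0 :=
    ((hasStrictDerivAt_pow 3 0).sub ((hasStrictDerivAt_pow 2 0).const_mul 2)).add
      ((hasStrictDerivAt_id (0:ℂ)).const_mul 2)
  convert h using 1
  · rfl
  norm_num

lemma cpoly_deriv_ne {s : ℂ} (hs : ‖s‖ ≤ 1/4) : 3*s^2 - 4*s + 2 ≠ 0 := by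
  intro h
  have h2 : (2:ℂ) = -(3*s^2 - 4*s) := by linear_combination h
  have hb : (2:ℝ) ≤ 3*‖s‖^2 + 4*‖s‖ := by
    calc (2:ℝ) = ‖(2:ℂ)‖ := by norm_num
    _ = ‖3*s^2 - 4*s‖ := by rw [h2, norm_neg]
    _ ≤ ‖(3:ℂ)*s^2‖ + ‖(4:ℂ)*s‖ := norm_sub_le _ _
    _ = 3*‖s‖^2 + 4*‖s‖ := by
        rw [norm_mul, norm_mul, norm_pow]
        norm_num
  nlinarith [norm_nonneg s]

lemma cubic_unique {s s' : ℂ} (hs : ‖s‖ ≤ 1/4) (hs' : ‖s'‖ ≤ 1/4)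
    (h : cpoly s = cpoly s') : s = s' := by
  by_contra hne
  have hfac : (s - s') * (s^2 + s*s' + s'^2 - 2*(s+s') + 2) = 0 := by
    unfold cpoly at h; linear_combination h
  have h2 : s^2 + s*s' + s'^2 - 2*(s+s') + 2 = 0 := by
    rcases mul_eq_zero.1 hfac with h' | h'
    · exact absurd (sub_eq_zero.1 h') hne
    · exact h'
  have key : ‖(2:ℂ)‖ ≤ ‖s^2 + s*s' + s'^2‖ + ‖(2:ℂ)*(s+s')‖ := by
    have hrw : (2:ℂ) = (2:ℂ)*(s+s') - (s^2 + s*s' + s'^2) := by linear_combination h2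
    calc ‖(2:ℂ)‖ = ‖(2:ℂ)*(s+s') - (s^2 + s*s' + s'^2)‖ := by rw [← hrw]
    _ ≤ ‖(2:ℂ)*(s+s')‖ + ‖s^2 + s*s' + s'^2‖ := norm_sub_le _ _
    _ = ‖s^2 + s*s' + s'^2‖ + ‖(2:ℂ)*(s+s')‖ := by ring
  have b1 : ‖s^2 + s*s' + s'^2‖ ≤ ‖s‖^2 + ‖s‖*‖s'‖ + ‖s'‖^2 := by
    calc ‖s^2 + s*s' + s'^2‖ ≤ ‖s^2 + s*s'‖ + ‖s'^2‖ := norm_add_le _ _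
    _ ≤ ‖s^2‖ + ‖s*s'‖ + ‖s'^2‖ := by gcongr; exact norm_add_le _ _
    _ = ‖s‖^2 + ‖s‖*‖s'‖ + ‖s'‖^2 := by rw [norm_pow, norm_pow, norm_mul]
  have b2 : ‖(2:ℂ)*(s+s')‖ ≤ 2*(‖s‖+‖s'‖) := by
    rw [norm_mul]
    have h2' : ‖(2:ℂ)‖ = 2 := by norm_num
    rw [h2']
    have := norm_add_le s s'
    linarith
  have h2n : ‖(2:ℂ)‖ = 2 := by norm_num
  rw [h2n] at key
  nlinarith [norm_nonneg s, norm_nonneg s']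

lemma exists_sigma : ∃ (σ : ℂ → ℂ) (rW : ℝ), 0 < rW ∧
    AnalyticOnNhd ℂ σ (Metric.ball (0:ℂ) rW) ∧
    ∀ ζ ∈ Metric.ball (0:ℂ) rW, cpoly (σ ζ) = ζ ∧ ‖σ ζ‖ < 1/4 := by
  have h2 : (2:ℂ) ≠ 0 := two_ne_zero
  have hf := hasStrictDerivAt_cpoly0.hasStrictFDerivAt_equiv h2
  set Λ := hf.toOpenPartialHomeomorph cpoly with hΛ
  have hcoe : (Λ : ℂ → ℂ) = cpoly := hf.toOpenPartialHomeomorph_coe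
  have hc00 : cpoly 0 = 0 := by simp [cpoly]
  have hsrc : (0:ℂ) ∈ Λ.source := hf.mem_toOpenPartialHomeomorph_source
  have htgt : (0:ℂ) ∈ Λ.target := by
    have := hf.image_mem_toOpenPartialHomeomorph_target
    rwa [hc00] at this
  set σ : ℂ → ℂ := ⇑Λ.symm with hσ
  have hopen : IsOpen Λ.target := Λ.open_target
  have hcont : ContinuousOn σ Λ.target := Λ.continuousOn_symm
  have hri : ∀ y ∈ Λ.target, cpoly (σ y) = y := by
    intro y hy
    have := Λ.right_inv hy
    rwa [hcoe] at this
  have hσ0 : σ 0 = 0 := by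
    have := Λ.left_inv hsrc
    rw [hcoe, hc00] at this
    exact this
  have hS : IsOpen (Λ.target ∩ σ ⁻¹' (Metric.ball (0:ℂ) (1/4))) :=
    hcont.isOpen_inter_preimage hopen Metric.isOpen_ball
  have h0S : (0:ℂ) ∈ Λ.target ∩ σ ⁻¹' (Metric.ball (0:ℂ) (1/4)) := by
    refine ⟨htgt, ?_⟩
    simp [hσ0]
  obtain ⟨rW, hrW, hsub⟩ := Metric.isOpen_iff.1 hS 0 h0S
  have hballt : Metric.ball (0:ℂ) rW ⊆ Λ.target := fun x hx => (hsub hx).1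
  have hsmall : ∀ ζ ∈ Metric.ball (0:ℂ) rW, ‖σ ζ‖ < 1/4 := by
    intro ζ hζ
    have := (hsub hζ).2
    simpa [Metric.mem_ball, dist_eq_norm] using this
  refine ⟨σ, rW, hrW, ?_, fun ζ hζ => ⟨hri ζ (hballt hζ), hsmall ζ hζ⟩⟩
  have hdiff : DifferentiableOn ℂ σ (Metric.ball (0:ℂ) rW) := by
    intro ζ hζ
    have hct : ContinuousAt σ ζ := hcont.continuousAt (hopen.mem_nhds (hballt hζ))
    have hder : HasDerivAt cpoly (3*(σ ζ)^2 - 4*(σ ζ) + 2) (σ ζ) := hasDerivAt_cpoly _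
    have hne : 3*(σ ζ)^2 - 4*(σ ζ) + 2 ≠ 0 := cpoly_deriv_ne (le_of_lt (hsmall ζ hζ))
    have hev : ∀ᶠ y in nhds ζ, cpoly (σ y) = y :=
      (hopen.eventually_mem (hballt hζ)).mono fun y hy => hri y hy
    exact ((hder.of_local_left_inverse hct hne hev).differentiableAt).differentiableWithinAt
  exact hdiff.analyticOnNhd Metric.isOpen_ball

lemma tendsto_real_seq (r : ℝ) (hr : 0 < r) :
    Tendsto (fun n : ℕ => ((r/(n+2) : ℝ) : ℂ)) atTop (nhdsWithin (0:ℂ) {z | z ≠ 0}) := by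
  have h1 : Tendsto (fun n : ℕ => (r/(n+2) : ℝ)) atTop (nhds 0) := by
    apply Tendsto.div_atTop (tendsto_const_nhds)
    exact tendsto_atTop_add_const_right _ 2 tendsto_natCast_atTop_atTop
  have h2 : Tendsto (fun n : ℕ => ((r/(n+2) : ℝ) : ℂ)) atTop (nhds 0) := by
    have h3 := (Complex.continuous_ofReal.tendsto 0).comp h1
    rw [Complex.ofReal_zero] at h3
    exact h3
  apply tendsto_nhdsWithin_of_tendsto_nhds_of_eventually_within _ h2
  apply Eventually.of_forall
  intro n
  have hpos : 0 < r/(n+2) := by positivity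
  simp only [Set.mem_setOf_eq, ne_eq, Complex.ofReal_eq_zero]
  exact ne_of_gt hpos

/-- If a holomorphic function  on an open preconnected set containing `0` vanishes at all
small positive reals, it vanishes on the whole set. -/
lemma eqOn_zero_of_real {S : Set ℂ} (hSc : IsPreconnected S) {g : ℂ → ℂ}
    (hg : AnalyticOnNhd ℂ g S) (h0 : (0:ℂ) ∈ S) {r : ℝ} (hr : 0 < r)
    (hvan : ∀ x : ℝ, 0 < x → x < r → g x = 0) : Set.EqOn g 0 S := by
  apply hg.eqOn_zero_of_preconnected_of_frequently_eq_zero hSc h0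
  have := (tendsto_real_seq r hr).frequently (p := fun z => g z = 0)
    (Frequently.of_forall fun n => ?_)
  · exact this
  · apply hvan
    · positivity
    · rw [div_lt_iff₀ (by positivity)]
      nlinarith [Nat.cast_nonneg (α := ℝ) n]

lemma analyticAt_vec3 {f₁ f₂ f₃ : ℂ → ℂ} {x : ℂ} (h₁ : AnalyticAt ℂ f₁ x)
    (h₂ : AnalyticAt ℂ f₂ x) (h₃ : AnalyticAt ℂ f₃ x) :
    AnalyticAt ℂ (fun z => (![f₁ z, f₂ z, f₃ z] : Fin 3 → ℂ)) x := by
  have h : AnalyticAt ℂ (fun z => (fun i => (![f₁, f₂, f₃] : Fin 3 → ℂ → ℂ) i z)) x := by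
    apply AnalyticAt.pi
    intro i
    fin_cases i <;> assumption
  have he : (fun z => (fun i => (![f₁, f₂, f₃] : Fin 3 → ℂ → ℂ) i z))
      = fun z => (![f₁ z, f₂ z, f₃ z] : Fin 3 → ℂ) := by
    funext z
    funext j
    fin_cases j <;> rfl
  rwa [he] at h

lemma analyticAt_proj (j : Fin 3) (x : Fin 3 → ℂ) :
    AnalyticAt ℂ (fun z : Fin 3 → ℂ => z j) x :=
  (ContinuousLinearMap.proj (R := ℂ) (φ := fun _ : Fin 3 => ℂ) j).analyticAt x

lemma Vβ_facts {β : ℝ} (hβ0 : 0 < β) (hβ1 : β ≤ 1/2) :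
    ∀ v ∈ Metric.thickening (β/6) (segment ℝ (0:ℂ) (Complex.I * (Real.sqrt (1-β) : ℂ))),
      ‖v‖ ≤ 2 ∧ 1/2 ≤ ‖1 + v‖ ∧ β/2 ≤ ‖1 + v^2‖ := by
  set vβ : ℂ := Complex.I * (Real.sqrt (1-β) : ℂ) with hvβ
  intro v hv
  rw [Metric.mem_thickening_iff] at hv
  obtain ⟨p, hp, hdist⟩ := hv
  rw [segment_eq_image] at hp
  obtain ⟨τ, hτ, hpeq⟩ := hp
  simp only [smul_zero, zero_add, sub_zero] at hpeq
  have hpval : p = (τ:ℂ) * vβ := by rw [← hpeq, Complex.real_smul]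
  have hsq : Real.sqrt (1-β) ^ 2 = 1 - β := Real.sq_sqrt (by linarith)
  have hsqle : Real.sqrt (1-β) ≤ 1 := Real.sqrt_le_one.2 (by linarith)
  have hvβnorm : ‖vβ‖ ≤ 1 := by
    rw [hvβ, norm_mul, Complex.norm_I, one_mul, Complex.norm_real, Real.norm_eq_abs,
      _root_.abs_of_nonneg (Real.sqrt_nonneg _)]
    exact hsqle
  have hτ0 : 0 ≤ τ := hτ.1
  have hτ1 : τ ≤ 1 := hτ.2
  have hpnorm : ‖p‖ ≤ 1 := by
    rw [hpval, norm_mul, Complex.norm_real, Real.norm_eq_abs, _root_.abs_of_nonneg hτ0]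
    exact mul_le_one₀ hτ1 (norm_nonneg _) hvβnorm
  have hδ : β/6 ≤ 1/12 := by linarith
  have hvp : ‖v - p‖ < β/6 := by rwa [← dist_eq_norm]
  have hvnorm : ‖v‖ ≤ 2 := by
    calc ‖v‖ = ‖p + (v - p)‖ := by ring_nf
    _ ≤ ‖p‖ + ‖v - p‖ := norm_add_le _ _
    _ ≤ 1 + β/6 := by linarith
    _ ≤ 2 := by linarith
  refine ⟨hvnorm, ?_, ?_⟩
  · have hpre : p.re = 0 := by
      rw [hpval, hvβ]
      simp
    have hre : |(v - p).re| ≤ ‖v - p‖ := Complex.abs_re_le_norm _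
    have h1v : 1 - β/6 ≤ (1 + v).re := by
      have : (1 + v).re = 1 + p.re + (v - p).re := by
        simp only [Complex.add_re, Complex.sub_re, Complex.one_re]
        ring
      rw [this, hpre]
      have := abs_le.1 hre
      linarith [this.1, hvp.le]
    calc (1:ℝ)/2 ≤ 1 - β/6 := by linarith
    _ ≤ (1 + v).re := h1v
    _ ≤ |(1 + v).re| := le_abs_self _
    _ ≤ ‖1 + v‖ := Complex.abs_re_le_norm _
  · have hp2 : 1 + p^2 = ((1 - τ^2 * (1-β) : ℝ) : ℂ) := by
      rw [hpval, hvβ]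
      push_cast
      rw [show ((τ:ℂ) * (Complex.I * (Real.sqrt (1-β):ℂ)))^2
          = (τ:ℂ)^2 * (Complex.I^2) * ((Real.sqrt (1-β):ℂ))^2 by ring]
      rw [Complex.I_sq]
      have : ((Real.sqrt (1-β):ℂ))^2 = ((1-β : ℝ) : ℂ) := by
        rw [← Complex.ofReal_pow, hsq]
      rw [this]
      push_cast
      ring
    have hp2norm : β ≤ ‖1 + p^2‖ := by
      rw [hp2, Complex.norm_real, Real.norm_eq_abs]
      have hτsq : τ^2 ≤ 1 := by nlinarith
      have h1 : τ^2 * (1-β) ≤ 1 - β := by nlinarith [hτsq]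
      have h2 : 0 ≤ τ^2 * (1-β) := by nlinarith [sq_nonneg τ]
      rw [_root_.abs_of_nonneg (by linarith)]
      linarith
    have hdiffsq : ‖v^2 - p^2‖ ≤ β/2 := by
      calc ‖v^2 - p^2‖ = ‖v - p‖ * ‖v + p‖ := by
            rw [← norm_mul]; ring_nf
      _ ≤ (β/6) * 3 := by
          apply mul_le_mul hvp.le ?_ (norm_nonneg _) (by linarith)
          calc ‖v + p‖ ≤ ‖v‖ + ‖p‖ := norm_add_le _ _
          _ ≤ 3 := by linarith
      _ = β/2 := by ring
    calc β/2 = β - β/2 := by ring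
    _ ≤ ‖1 + p^2‖ - ‖v^2 - p^2‖ := by linarith
    _ ≤ ‖1 + p^2‖ - ‖(1 + v^2) - (1 + p^2)‖ := by
        have : (1 + v^2) - (1 + p^2) = v^2 - p^2 := by ring
        rw [this]
    _ ≤ ‖1 + v^2‖ := by
        linarith [(abs_le.1 (abs_norm_sub_norm_le (1+v^2) (1+p^2))).1]

/-- Rational parametrization of the complex quartic. -/
def Psi (z₁ v : ℂ) : Fin 3 → ℂ := ![z₁, z₁ * v, z₁ / ((1 + v^2) * (1 + v))]

@[simp] lemma Psi_0 (z₁ v : ℂ) : Psi z₁ v 0 = z₁ := rfl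
@[simp] lemma Psi_1 (z₁ v : ℂ) : Psi z₁ v 1 = z₁ * v := rfl
@[simp] lemma Psi_2 (z₁ v : ℂ) : Psi z₁ v 2 = z₁ / ((1 + v^2) * (1 + v)) := rfl

lemma Psi_real_eq (x u : ℝ) :
    Psi (x:ℂ) (u:ℂ) = fun j => (((![x, x*u, x/((1+u^2)*(1+u))] : Fin 3 → ℝ) j : ℝ) : ℂ) := by
  funext j
  fin_cases j
  · rfl
  · show (x:ℂ) * (u:ℂ) = ((x*u : ℝ) : ℂ)
    push_cast; ring
  · show (x:ℂ) / ((1 + (u:ℂ)^2) * (1 + (u:ℂ))) = ((x/((1+u^2)*(1+u)) : ℝ) : ℂ)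
    push_cast; ring

lemma Psi_real_mem {x u : ℝ} (hu : (1+u^2)*(1+u) ≠ 0) :
    Psi (x:ℂ) (u:ℂ) ∈ cartanSet3C := by
  rw [Psi_real_eq x u]
  constructor
  · intro j
    simp
  · simp only [Complex.ofReal_re]
    show x/((1+u^2)*(1+u)) * ((x^2 + (x*u)^2)) * (x + x*u) = x^4
    have h1u : 1 + u ≠ 0 := right_ne_zero_of_mul hu
    have h2u : 1 + u^2 ≠ 0 := left_ne_zero_of_mul hu
    field_simp

end S15

set_option maxHeartbeats 2000000 in
/-- For the set `R = {x₃(x₁² + x₂²)(x₁ + x₂) = x₁⁴} ⊆ ℝ³ ⊆ ℂ³` there is no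
complex analytic set `X` defined on an open neighbourhood of `R` whose germ at every `p ∈ R`
is the smallest complex analytic germ containing `R_p`. -/
theorem statement15 :
    ¬ ∃ (U X : Set (Fin 3 → ℂ)), IsOpen U ∧ cartanSet3C ⊆ U ∧
      IsComplexAnalyticSubset U X ∧
      ∀ p ∈ cartanSet3C, IsSmallestComplexGermAt cartanSet3C p X := by
  rintro ⟨U, X, hUo, hRU, ⟨hXU, hXloc⟩, hmin⟩
  have h0R : (0 : Fin 3 → ℂ) ∈ cartanSet3C := by
    refine ⟨fun j => by simp, by simp⟩
  obtain ⟨U₀, hU₀o, h0U₀, hU₀U, k0, φ, hφ, hXU₀⟩ := hXloc 0 (hRU h0R)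
  obtain ⟨V₀, hV₀o, h0V₀, hRV₀X⟩ := (hmin 0 h0R).2.1
  obtain ⟨r2, hr2pos, hball⟩ := Metric.isOpen_iff.1 (hU₀o.inter hV₀o) 0 ⟨h0U₀, h0V₀⟩
  set r1 : ℝ := r2/4 with hr1def
  have hr1pos : 0 < r1 := by positivity
  set t : ℝ := r1/32 with htdef
  have htpos : 0 < t := by positivity
  -- KEY: points of the extra complex branch near (0,0,t) belong to X
  have key : ∀ β : ℝ, 0 < β → β ≤ 1/2 → ∀ z₁ : ℂ, ‖z₁‖ < r1 * β/8 →
      S15.Psi z₁ (Complex.I * (Real.sqrt (1-β) : ℂ)) ∈ X := by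
    intro β hβ0 hβ1 z₁ hz₁
    set vβ : ℂ := Complex.I * (Real.sqrt (1-β) : ℂ) with hvβdef
    set δ : ℝ := β/6 with hδdef
    set ε : ℝ := r1 * β/8 with hεdef
    have hδpos : 0 < δ := by rw [hδdef]; positivity
    have hεpos : 0 < ε := by rw [hεdef]; positivity
    set Vb : Set ℂ := Metric.thickening δ (segment ℝ (0:ℂ) vβ) with hVbdef
    have hVo : IsOpen Vb := Metric.isOpen_thickening
    have hVc : IsPreconnected Vb := ((convex_segment (0:ℂ) vβ).thickening δ).isPreconnected
    have h0V : (0:ℂ) ∈ Vb := by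
      rw [hVbdef, Metric.mem_thickening_iff]
      exact ⟨0, left_mem_segment ℝ 0 vβ, by simpa using hδpos⟩
    have hvV : vβ ∈ Vb := by
      rw [hVbdef, Metric.mem_thickening_iff]
      exact ⟨vβ, right_mem_segment ℝ 0 vβ, by simpa using hδpos⟩
    have huV : ∀ u : ℝ, |u| < δ → (u:ℂ) ∈ Vb := by
      intro u hu
      rw [hVbdef, Metric.mem_thickening_iff]
      refine ⟨0, left_mem_segment ℝ 0 vβ, ?_⟩
      rw [dist_zero_right, Complex.norm_real, Real.norm_eq_abs]
      exact hu
    have hfacts := S15.Vβ_facts hβ0 hβ1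
    have hden : ∀ v ∈ Vb, ((1:ℂ) + v^2) * (1 + v) ≠ 0 ∧
        β/4 ≤ ‖((1:ℂ) + v^2) * (1 + v)‖ ∧ ‖v‖ ≤ 2 := by
      intro v hv
      obtain ⟨hn2, hn1, hnsq⟩ := hfacts v hv
      have hne1 : (1:ℂ) + v ≠ 0 := by
        intro h
        rw [h, norm_zero] at hn1
        linarith
      have hne2 : (1:ℂ) + v^2 ≠ 0 := by
        intro h
        rw [h, norm_zero] at hnsq
        linarith
      refine ⟨mul_ne_zero hne2 hne1, ?_, hn2⟩
      rw [norm_mul]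
      calc β/4 = (β/2) * (1/2) := by ring
      _ ≤ ‖1 + v^2‖ * ‖1 + v‖ := by
          apply mul_le_mul hnsq hn1 (by norm_num) (norm_nonneg _)
    have hmem : ∀ v ∈ Vb, ∀ w : ℂ, ‖w‖ < ε →
        S15.Psi w v ∈ Metric.ball (0 : Fin 3 → ℂ) r2 := by
      intro v hv w hw
      obtain ⟨hdne, hdlow, hv2⟩ := hden v hv
      have hβ4pos : (0:ℝ) < β/4 := by positivity
      have hwnn : (0:ℝ) ≤ ‖w‖ := norm_nonneg w
      have hεr : ε ≤ r1/16 := by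
        rw [hεdef]
        nlinarith [hr1pos]
      have hc0 : ‖w‖ < r2 := by
        have : r1/16 < r2 := by rw [hr1def]; linarith
        linarith
      have hc1 : ‖w * v‖ < r2 := by
        rw [norm_mul]
        have h1 : ‖w‖ * ‖v‖ ≤ ‖w‖ * 2 := by nlinarith
        have : r1/8 < r2 := by rw [hr1def]; linarith
        nlinarith
      have hc2 : ‖w / (((1:ℂ) + v^2) * (1 + v))‖ < r2 := by
        rw [norm_div]
        have h1 : ‖w‖ / ‖((1:ℂ) + v^2) * (1 + v)‖ ≤ ‖w‖ / (β/4) :=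
          div_le_div_of_nonneg_left hwnn hβ4pos hdlow
        have h2 : ‖w‖ / (β/4) < ε / (β/4) := by gcongr
        have h3 : ε / (β/4) = r1/2 := by
          rw [hεdef]
          field_simp
          ring
        have h4 : r1/2 < r2 := by rw [hr1def]; linarith
        rw [h3] at h2
        linarith
      rw [Metric.mem_ball, dist_pi_lt_iff hr2pos]
      intro j
      fin_cases j
      · show dist (S15.Psi w v 0) ((0 : Fin 3 → ℂ) 0) < r2
        rw [S15.Psi_0, Pi.zero_apply, dist_zero_right]
        exact hc0
      · show dist (S15.Psi w v 1) ((0 : Fin 3 → ℂ) 1) < r2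
        rw [S15.Psi_1, Pi.zero_apply, dist_zero_right]
        exact hc1
      · show dist (S15.Psi w v 2) ((0 : Fin 3 → ℂ) 2) < r2
        rw [S15.Psi_2, Pi.zero_apply, dist_zero_right]
        exact hc2
    have step1 : ∀ i, ∀ u : ℝ, |u| < δ → ∀ w : ℂ, ‖w‖ < ε → φ i (S15.Psi w (u:ℂ)) = 0 := by
      intro i u hu
      have huVb := huV u hu
      obtain ⟨hdne, hdlow, hvn⟩ := hden (u:ℂ) huVb
      have hudenreal : ((1:ℝ)+u^2)*(1+u) ≠ 0 := by
        intro h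
        apply hdne
        have : (((1+u^2)*(1+u) : ℝ) : ℂ) = ((1:ℂ) + (u:ℂ)^2) * (1 + (u:ℂ)) := by push_cast; ring
        rw [← this, h]
        simp
      have hEq : Set.EqOn (fun w : ℂ => φ i (S15.Psi w (u:ℂ))) 0 (Metric.ball (0:ℂ) ε) := by
        apply S15.eqOn_zero_of_real (convex_ball (0:ℂ) ε).isPreconnected
        · -- analytic
          intro w hw
          have hwε : ‖w‖ < ε := by rwa [Metric.mem_ball, dist_zero_right] at hw
          have hU₀m : S15.Psi w (u:ℂ) ∈ U₀ := (hball (hmem (u:ℂ) huVb w hwε)).1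
          have hPsiAt : AnalyticAt ℂ (fun w : ℂ => S15.Psi w (u:ℂ)) w := by
            show AnalyticAt ℂ (fun w : ℂ =>
              (![w, w * (u:ℂ), w / (((1:ℂ) + (u:ℂ)^2) * (1 + (u:ℂ)))] : Fin 3 → ℂ)) w
            apply S15.analyticAt_vec3
            · exact analyticAt_id
            · exact analyticAt_id.mul analyticAt_const
            · exact analyticAt_id.div analyticAt_const hdne
          exact AnalyticAt.comp (f := fun w : ℂ => S15.Psi w (u:ℂ)) (hφ i _ hU₀m) hPsiAt
        · exact Metric.mem_ball_self hεpos
        · exact hεpos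
        · intro x hx0 hxε
          have hxa : |x| < ε := by rw [_root_.abs_of_pos hx0]; exact hxε
          have hxc : ‖((x:ℝ):ℂ)‖ < ε := by
            rw [Complex.norm_real, Real.norm_eq_abs]; exact hxa
          have hR : S15.Psi (x:ℂ) (u:ℂ) ∈ cartanSet3C := S15.Psi_real_mem hudenreal
          have hU₀V₀ := hball (hmem (u:ℂ) huVb ((x:ℝ):ℂ) hxc)
          have hXm : S15.Psi (x:ℂ) (u:ℂ) ∈ X := hRV₀X ⟨hR, hU₀V₀.2⟩
          have : S15.Psi (x:ℂ) (u:ℂ) ∈ X ∩ U₀ := ⟨hXm, hU₀V₀.1⟩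
          rw [hXU₀] at this
          exact this.2 i
      intro w hw
      exact hEq (by rw [Metric.mem_ball, dist_zero_right]; exact hw)
    have step2 : ∀ i, φ i (S15.Psi z₁ vβ) = 0 := by
      intro i
      have hEq : Set.EqOn (fun v : ℂ => φ i (S15.Psi z₁ v)) 0 Vb := by
        apply S15.eqOn_zero_of_real hVc
        · intro v hv
          have hU₀m : S15.Psi z₁ v ∈ U₀ := (hball (hmem v hv z₁ hz₁)).1
          have hdne := (hden v hv).1
          have hPsiAt : AnalyticAt ℂ (fun v : ℂ => S15.Psi z₁ v) v := by
            show AnalyticAt ℂ (fun v : ℂ =>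
              (![z₁, z₁ * v, z₁ / (((1:ℂ) + v^2) * (1 + v))] : Fin 3 → ℂ)) v
            apply S15.analyticAt_vec3
            · exact analyticAt_const
            · exact analyticAt_const.mul analyticAt_id
            · exact analyticAt_const.div
                ((analyticAt_const.add (analyticAt_id.pow 2)).mul
                  (analyticAt_const.add analyticAt_id)) hdne
          exact AnalyticAt.comp (f := fun v : ℂ => S15.Psi z₁ v) (hφ i _ hU₀m) hPsiAt
        · exact h0V
        · exact hδpos
        · intro u hu0 huδ
          exact step1 i u (by rw [_root_.abs_of_pos hu0]; exact huδ) z₁ hz₁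
      exact hEq hvV
    have hU₀m : S15.Psi z₁ vβ ∈ U₀ := (hball (hmem vβ hvV z₁ hz₁)).1
    have hfin : S15.Psi z₁ vβ ∈ X ∩ U₀ := by
      rw [hXU₀]
      exact ⟨hU₀m, step2⟩
    exact hfin.1
  -- σ and the branch function f near qt
  obtain ⟨σ, rW, hrW, hσa, hσprop⟩ := S15.exists_sigma
  set qt : Fin 3 → ℂ := ![0, 0, (t:ℂ)] with hqtdef
  have hqt0 : qt 0 = 0 := rfl
  have hqt1 : qt 1 = 0 := rfl
  have hqt2 : qt 2 = (t:ℂ) := rfl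
  have hqtR : qt ∈ cartanSet3C := by
    constructor
    · intro j
      fin_cases j
      · simp [hqtdef]
      · simp [hqtdef]
      · show ((t:ℂ)).im = 0
        simp
    · rw [hqt0, hqt1, hqt2]
      simp
  set ρ : ℝ := min (t/8) (t*rW/8) with hρdef
  have hρpos : 0 < ρ := lt_min (by positivity) (by positivity)
  have hρ8 : ρ ≤ t/8 := min_le_left _ _
  have hρrW : ρ ≤ t*rW/8 := min_le_right _ _
  set f : (Fin 3 → ℂ) → ℂ := fun z => z 0 + z 1 - z 0 * σ (z 0 / z 2) with hfdef
  set Uq : Set (Fin 3 → ℂ) := Metric.ball qt ρ with hUqdef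
  have hUqco : ∀ z ∈ Uq, ‖z 0‖ < ρ ∧ ‖z 1‖ < ρ ∧ ‖z 2 - (t:ℂ)‖ < ρ ∧
      (t:ℝ)*(7/8) < ‖z 2‖ ∧ z 2 ≠ 0 ∧ z 0 / z 2 ∈ Metric.ball (0:ℂ) rW := by
    intro z hz
    have hd := (dist_pi_lt_iff hρpos).1 (Metric.mem_ball.1 hz)
    have h0' := hd 0
    have h1' := hd 1
    have h2' := hd 2
    rw [hqt0, dist_eq_norm, sub_zero] at h0'
    rw [hqt1, dist_eq_norm, sub_zero] at h1'
    rw [hqt2, dist_eq_norm] at h2'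
    have htnorm : ‖((t:ℝ):ℂ)‖ = t := by
      rw [Complex.norm_real, Real.norm_eq_abs, _root_.abs_of_pos htpos]
    have hz2 : (t:ℝ)*(7/8) < ‖z 2‖ := by
      have hge := norm_sub_norm_le ((t:ℝ):ℂ) (z 2)
      rw [htnorm] at hge
      have : ‖(t:ℂ) - z 2‖ = ‖z 2 - (t:ℂ)‖ := by rw [norm_sub_rev]
      rw [this] at hge
      have hρ' : ρ ≤ t/8 := hρ8
      linarith
    have hz2ne : z 2 ≠ 0 := by
      intro h
      rw [h, norm_zero] at hz2
      nlinarith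
    refine ⟨h0', h1', h2', hz2, hz2ne, ?_⟩
    have hz2pos : (0:ℝ) < ‖z 2‖ := lt_trans (by positivity) hz2
    rw [Metric.mem_ball, dist_zero_right, norm_div]
    rw [div_lt_iff₀ hz2pos]
    have h1 : ‖z 0‖ < t*rW/8 := lt_of_lt_of_le h0' hρrW
    nlinarith [hrW, htpos, norm_nonneg (z 0)]
  have hfa : AnalyticOnNhd ℂ f Uq := by
    intro z hz
    obtain ⟨h0', h1', h2', hz2, hz2ne, hzdiv⟩ := hUqco z hz
    have p0 : AnalyticAt ℂ (fun z : Fin 3 → ℂ => z 0) z := S15.analyticAt_proj 0 z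
    have p1 : AnalyticAt ℂ (fun z : Fin 3 → ℂ => z 1) z := S15.analyticAt_proj 1 z
    have p2 : AnalyticAt ℂ (fun z : Fin 3 → ℂ => z 2) z := S15.analyticAt_proj 2 z
    have hdiv : AnalyticAt ℂ (fun z : Fin 3 → ℂ => z 0 / z 2) z := p0.div p2 hz2ne
    have hσat : AnalyticAt ℂ σ (z 0 / z 2) := hσa _ hzdiv
    have hcomp : AnalyticAt ℂ (fun z : Fin 3 → ℂ => σ (z 0 / z 2)) z :=
      AnalyticAt.comp (f := fun z : Fin 3 → ℂ => z 0 / z 2) hσat hdiv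
    exact (p0.add p1).sub (p0.mul hcomp)
  set Y : Set (Fin 3 → ℂ) := {z | z ∈ Uq ∧ f z = 0} with hYdef
  have hYc : IsComplexAnalyticSubset Uq Y := by
    constructor
    · exact fun z hz => hz.1
    · intro p hp
      refine ⟨Uq, Metric.isOpen_ball, hp, subset_rfl, 1, fun _ => f, fun _ => hfa, ?_⟩
      ext w
      constructor
      · rintro ⟨⟨hwUq, hwf⟩, -⟩
        exact ⟨hwUq, fun _ => hwf⟩
      · rintro ⟨hwUq, hall⟩
        exact ⟨⟨hwUq, hall 0⟩, hwUq⟩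
  have hqtUq : qt ∈ Uq := Metric.mem_ball_self hρpos
  have hRY : GermLE cartanSet3C Y qt := by
    refine ⟨Uq, Metric.isOpen_ball, hqtUq, ?_⟩
    rintro z ⟨⟨him, heq⟩, hzUq⟩
    obtain ⟨h0', h1', h2', hx3n, hz2ne, hzdiv⟩ := hUqco z hzUq
    have hzr : ∀ j, z j = ((z j).re : ℂ) := fun j => Complex.ext (by simp) (by simp [him j])
    set x1 : ℝ := (z 0).re with hx1def
    set x2 : ℝ := (z 1).re with hx2def
    set x3 : ℝ := (z 2).re with hx3def
    have hx1a : |x1| < ρ := by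
      have := h0'
      rw [hzr 0, Complex.norm_real, Real.norm_eq_abs] at this
      exact this
    have hx3a : |x3 - t| < ρ := by
      have := h2'
      rw [hzr 2, show ((x3:ℝ):ℂ) - ((t:ℝ):ℂ) = (((x3 - t : ℝ)):ℂ) by push_cast; ring,
        Complex.norm_real, Real.norm_eq_abs] at this
      exact this
    have hx3pos : t*(7/8) < x3 := by
      have h := (abs_lt.1 hx3a).1
      linarith [hρ8]
    have hx3pos' : 0 < x3 := lt_trans (by positivity) hx3pos
    have hx3ne : x3 ≠ 0 := ne_of_gt hx3pos'
    -- the defining equation, in real variables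
    have heqr : x3 * (x1^2 + x2^2) * (x1 + x2) = x1^4 := heq
    have hfz : f z = ((x1:ℝ):ℂ) + ((x2:ℝ):ℂ) - ((x1:ℝ):ℂ) * σ (((x1/x3 : ℝ)):ℂ) := by
      rw [hfdef]
      show z 0 + z 1 - z 0 * σ (z 0 / z 2) = _
      rw [hzr 0, hzr 1, hzr 2, ← hx1def, ← hx2def, ← hx3def, ← Complex.ofReal_div]
    by_cases hx1 : x1 = 0
    · -- on the axis: x2 = 0 as well
      have hx2cube : x3 * x2^3 = 0 := by
        rw [hx1] at heqr
        linear_combination heqr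
      have hx2 : x2 = 0 := by
        rcases mul_eq_zero.1 hx2cube with h | h
        · exact absurd h hx3ne
        · exact pow_eq_zero_iff (by norm_num) |>.1 h
      refine ⟨hzUq, ?_⟩
      rw [hfz, hx1, hx2]
      simp
    · -- off the axis: the real point lies on the small branch
      set w : ℝ := x1 + x2 with hwdef
      have hx1sq : 0 < x1^2 := by positivity
      have h4 : x3 * (x1^2 + x2^2) * |w| = x1^4 := by
        have := congrArg abs heqr
        rw [abs_mul, abs_mul, _root_.abs_of_pos hx3pos',
          _root_.abs_of_nonneg (by positivity : (0:ℝ) ≤ x1^2 + x2^2)] at this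
        rw [this]
        exact _root_.abs_of_nonneg (by positivity)
      have hwb : |w| * x3 ≤ x1^2 := by
        nlinarith [h4, hx1sq, mul_nonneg (mul_nonneg hx3pos'.le (abs_nonneg w)) (sq_nonneg x2)]
      have hx1abs : 0 < |x1| := abs_pos.2 hx1
      have hsb : |w| * 4 ≤ |x1| := by
        have h5 : |w| * (t*(7/8)) ≤ |w| * x3 := by
          apply mul_le_mul_of_nonneg_left hx3pos.le (abs_nonneg w)
        have h6 : x1^2 = |x1| * |x1| := by rw [← abs_mul, abs_mul_self]; ring_nf
        have h7 : |x1| ≤ t/8 := le_trans hx1a.le hρ8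
        nlinarith [abs_nonneg w, hx1abs, htpos]
      have hζa : |x1/x3| < rW := by
        rw [abs_div, _root_.abs_of_pos hx3pos']
        rw [div_lt_iff₀ hx3pos']
        have h7 : |x1| < t*rW/8 := lt_of_lt_of_le hx1a hρrW
        nlinarith [hrW, htpos]
      have hζball : (((x1/x3 : ℝ)):ℂ) ∈ Metric.ball (0:ℂ) rW := by
        rw [Metric.mem_ball, dist_zero_right, Complex.norm_real, Real.norm_eq_abs]
        exact hζa
      have hx1' : x1 ≠ 0 := hx1
      have hwid : w^3 - 2*x1*w^2 + 2*x1^2*w = w*(x1^2+x2^2) := by rw [hwdef]; ring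
      have hval : x3 * (w*(x1^2+x2^2)) = x1^4 := by rw [hwdef]; linear_combination heqr
      have hreal : (w/x1)^3 - 2*(w/x1)^2 + 2*(w/x1) = x1/x3 := by
        have hstep : (w/x1)^3 - 2*(w/x1)^2 + 2*(w/x1)
            = (w^3 - 2*x1*w^2 + 2*x1^2*w)/x1^3 := by
          field_simp
        rw [hstep, hwid, div_eq_div_iff (pow_ne_zero 3 hx1') hx3ne]
        linear_combination hval
      have hcub : S15.cpoly (((w/x1 : ℝ)):ℂ) = (((x1/x3 : ℝ)):ℂ) := by
        unfold S15.cpoly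
        rw [show ((((w/x1 : ℝ)):ℂ))^3 - 2*((((w/x1 : ℝ)):ℂ))^2 + 2*(((w/x1 : ℝ)):ℂ)
            = (((((w/x1)^3 - 2*(w/x1)^2 + 2*(w/x1)) : ℝ)):ℂ) by push_cast; ring, hreal]
      obtain ⟨hσc, hσn⟩ := hσprop (((x1/x3 : ℝ)):ℂ) hζball
      have hnorm1 : ‖(((w/x1 : ℝ)):ℂ)‖ ≤ 1/4 := by
        rw [Complex.norm_real, Real.norm_eq_abs, abs_div]
        rw [div_le_iff₀ hx1abs]
        linarith
      have hequal : (((w/x1 : ℝ)):ℂ) = σ (((x1/x3 : ℝ)):ℂ) :=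
        S15.cubic_unique hnorm1 hσn.le (hcub.trans hσc.symm)
      refine ⟨hzUq, ?_⟩
      rw [hfz, ← hequal]
      rw [show ((x1:ℝ):ℂ) + ((x2:ℝ):ℂ) - ((x1:ℝ):ℂ) * (((w/x1 : ℝ)):ℂ)
          = (((x1 + x2 - x1 * (w/x1)) : ℝ) : ℂ) by push_cast; ring]
      rw [show x1 + x2 - x1 * (w/x1) = 0 by field_simp; linarith]
      simp
  obtain ⟨V', hV'o, hqtV', hXV'Y⟩ := (hmin qt hqtR).2.2 Uq Y Metric.isOpen_ball hqtUq hYc hRY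
  obtain ⟨η, hηpos, hηsub⟩ := Metric.isOpen_iff.1 hV'o qt hqtV'
  -- choose β and derive the contradiction
  set βf : ℝ := min (1/2) (min (η/(8*t)) (min (ρ/(8*t)) (rW/4))) with hβfdef
  have hβf0 : 0 < βf := by
    apply lt_min (by norm_num)
    apply lt_min (by positivity)
    exact lt_min (by positivity) (by positivity)
  have hβf12 : βf ≤ 1/2 := min_le_left _ _
  have hβfη : βf ≤ η/(8*t) := le_trans (min_le_right _ _) (min_le_left _ _)
  have hβfρ : βf ≤ ρ/(8*t) :=
    le_trans (min_le_right _ _) (le_trans (min_le_right _ _) (min_le_left _ _))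
  have hβfrW : βf ≤ rW/4 :=
    le_trans (min_le_right _ _) (le_trans (min_le_right _ _) (min_le_right _ _))
  set vβ : ℂ := Complex.I * (Real.sqrt (1-βf) : ℂ) with hvβdef
  have hsq : Real.sqrt (1-βf) ^ 2 = 1 - βf := Real.sq_sqrt (by linarith)
  have hsqle : Real.sqrt (1-βf) ≤ 1 := Real.sqrt_le_one.2 (by linarith)
  have hvβnorm : ‖vβ‖ ≤ 1 := by
    rw [hvβdef, norm_mul, Complex.norm_I, one_mul, Complex.norm_real, Real.norm_eq_abs,
      _root_.abs_of_nonneg (Real.sqrt_nonneg _)]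
    exact hsqle
  have hvβre : vβ.re = 0 := by rw [hvβdef]; simp
  have h1vβ : (1:ℝ) ≤ ‖1 + vβ‖ := by
    have : (1 + vβ).re = 1 := by
      simp [Complex.add_re, hvβre]
    calc (1:ℝ) = (1 + vβ).re := this.symm
    _ ≤ |(1 + vβ).re| := le_abs_self _
    _ ≤ ‖1 + vβ‖ := Complex.abs_re_le_norm _
  have h1vβ2 : ‖1 + vβ‖ ≤ 2 := by
    calc ‖1 + vβ‖ ≤ ‖(1:ℂ)‖ + ‖vβ‖ := norm_add_le _ _
    _ ≤ 2 := by rw [norm_one]; linarith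
  have h1vβne : (1:ℂ) + vβ ≠ 0 := by
    intro h
    rw [h, norm_zero] at h1vβ
    linarith
  have hvβsq : 1 + vβ^2 = ((βf:ℝ):ℂ) := by
    rw [hvβdef]
    rw [show (Complex.I * ((Real.sqrt (1-βf):ℝ):ℂ))^2
        = Complex.I^2 * (((Real.sqrt (1-βf):ℝ):ℂ))^2 by ring]
    rw [Complex.I_sq, ← Complex.ofReal_pow, hsq]
    push_cast
    ring
  set aβ : ℂ := (t:ℂ) * (βf:ℂ) * (1 + vβ) with haβdef
  have haβnorm : ‖aβ‖ ≤ 2*t*βf := by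
    rw [haβdef, norm_mul, norm_mul]
    rw [Complex.norm_real, Complex.norm_real, Real.norm_eq_abs, Real.norm_eq_abs,
      _root_.abs_of_pos htpos, _root_.abs_of_pos hβf0]
    have h := mul_le_mul_of_nonneg_left h1vβ2 (mul_nonneg htpos.le hβf0.le)
    nlinarith [h]
  have haβne : aβ ≠ 0 := by
    rw [haβdef]
    apply mul_ne_zero (mul_ne_zero ?_ ?_) h1vβne
    · exact_mod_cast ne_of_gt htpos
    · exact_mod_cast ne_of_gt hβf0
  have hm : S15.Psi aβ vβ ∈ X := by
    apply key βf hβf0 hβf12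
    calc ‖aβ‖ ≤ 2*t*βf := haβnorm
    _ = r1*βf/16 := by rw [htdef]; ring
    _ < r1*βf/8 := by
        have : 0 < r1*βf := by positivity
        linarith
  have hPsi2 : S15.Psi aβ vβ 2 = (t:ℂ) := by
    rw [S15.Psi_2, hvβsq, haβdef]
    have hβfne : ((βf:ℝ):ℂ) ≠ 0 := by exact_mod_cast ne_of_gt hβf0
    field_simp
  have hζ0 : aβ / ((t:ℂ)) = (βf:ℂ) * (1 + vβ) := by
    rw [haβdef]
    have htne : ((t:ℝ):ℂ) ≠ 0 := by exact_mod_cast ne_of_gt htpos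
    field_simp
  have hζ0ball : (βf:ℂ) * (1 + vβ) ∈ Metric.ball (0:ℂ) rW := by
    rw [Metric.mem_ball, dist_zero_right, norm_mul, Complex.norm_real, Real.norm_eq_abs,
      _root_.abs_of_pos hβf0]
    calc βf * ‖1 + vβ‖ ≤ βf * 2 := by nlinarith
    _ ≤ rW/2 := by linarith
    _ < rW := by linarith
  have hdistm : dist (S15.Psi aβ vβ) qt < min η ρ := by
    rw [dist_pi_lt_iff (lt_min hηpos hρpos)]
    intro j
    have hbound : 2*t*βf < min η ρ := by
      have h1 : 2*t*βf ≤ η/4 := by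
        have := mul_le_mul_of_nonneg_left hβfη (le_of_lt (by positivity : (0:ℝ) < 2*t))
        calc 2*t*βf ≤ 2*t*(η/(8*t)) := by nlinarith
        _ = η/4 := by field_simp; ring
      have h2 : 2*t*βf ≤ ρ/4 := by
        calc 2*t*βf ≤ 2*t*(ρ/(8*t)) := by nlinarith
        _ = ρ/4 := by field_simp; ring
      have hη4 : η/4 < η := by linarith
      have hρ4 : ρ/4 < ρ := by linarith
      rcases le_total η ρ with h | h
      · rw [min_eq_left h]; linarith
      · rw [min_eq_right h]; linarith
    fin_cases j
    · show dist (S15.Psi aβ vβ 0) (qt 0) < _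
      rw [S15.Psi_0, hqt0, dist_eq_norm, sub_zero]
      calc ‖aβ‖ ≤ 2*t*βf := haβnorm
      _ < min η ρ := hbound
    · show dist (S15.Psi aβ vβ 1) (qt 1) < _
      rw [S15.Psi_1, hqt1, dist_eq_norm, sub_zero, norm_mul]
      calc ‖aβ‖ * ‖vβ‖ ≤ ‖aβ‖ * 1 := by nlinarith [norm_nonneg aβ]
      _ = ‖aβ‖ := by ring
      _ ≤ 2*t*βf := haβnorm
      _ < min η ρ := hbound
    · show dist (S15.Psi aβ vβ 2) (qt 2) < _
      rw [hPsi2, hqt2, dist_self]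
      exact lt_min hηpos hρpos
  have hmV' : S15.Psi aβ vβ ∈ V' := hηsub (by
    rw [Metric.mem_ball]
    exact lt_of_lt_of_le hdistm (min_le_left _ _))
  have hmY : S15.Psi aβ vβ ∈ Y := hXV'Y ⟨hm, hmV'⟩
  have hfm : f (S15.Psi aβ vβ) = 0 := hmY.2
  -- but f does not vanish there
  have hσs := (hσprop ((βf:ℂ) * (1 + vβ)) hζ0ball).2
  have hne : f (S15.Psi aβ vβ) ≠ 0 := by
    rw [hfdef]
    show aβ + aβ * vβ - aβ * σ (S15.Psi aβ vβ 0 / S15.Psi aβ vβ 2) ≠ 0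
    rw [S15.Psi_0, hPsi2, hζ0]
    have hfactor : aβ + aβ * vβ - aβ * σ ((βf:ℂ) * (1 + vβ))
        = aβ * (1 + vβ - σ ((βf:ℂ) * (1 + vβ))) := by ring
    rw [hfactor]
    apply mul_ne_zero haβne
    intro h
    have hre : (1 + vβ - σ ((βf:ℂ) * (1 + vβ))).re = 0 := by rw [h]; simp
    have hre2 : (1 + vβ - σ ((βf:ℂ) * (1 + vβ))).re
        = 1 - (σ ((βf:ℂ) * (1 + vβ))).re := by
      simp [Complex.sub_re, Complex.add_re, hvβre]
    have habs : |(σ ((βf:ℂ) * (1 + vβ))).re| ≤ ‖σ ((βf:ℂ) * (1 + vβ))‖ :=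
      Complex.abs_re_le_norm _
    have := abs_le.1 habs
    rw [hre2] at hre
    linarith [this.2]
  exact hne hfm
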